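/- Let n ≥ 1 and s = (s₁, …, s_n) be a vector of positive integers. For each i let Vᵢ be a set of sᵢ 'copies' of vertex i, the sets Vᵢ pairwise disjoint, and let G_s be the graph on V₁ ∪ … ∪ V_n whose edges join every copy of i to every copy of j for all i ≠ j (no edges inside any Vᵢ). Let τ : {(i,j) : 1 ≤ i < j ≤ n} → ℕ satisfy Σ_{j ≠ i} τ_{ij} = sᵢ for every i (an s-matching). Then the number of perfect matchings π of G_s such that, for every pair i < j, exactly τ_{ij} edges of π join Vᵢ to Vⱼ, equals s!/τ!, where s! = Π_i sᵢ! and τ! = Π_{i<j} τ_{ij}!. (This is the fiber-counting step in the proof of Lemma 7 of the paper.) -/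

import Mathlib

namespace CMF

variable {n : ℕ} {s : Fin n → ℕ} (τ : Fin n → Fin n → ℕ)

/-- symmetrized version of `τ` -/
def sym (i j : Fin n) : ℕ := if i < j then τ i j else if j < i then τ j i else 0

lemma sym_symm (i j : Fin n) : sym τ i j = sym τ j i := by
  rcases lt_trichotomy i j with h | h | h <;> simp [sym, h, h.not_gt, lt_irrefl]

lemma sfin_ext {ι : Type*} {m : ι → ℕ} {v w : Σ k, Fin (m k)}
    (h1 : v.1 = w.1) (h2 : (v.2 : ℕ) = (w.2 : ℕ)) : v = w := by
  obtain ⟨a, x⟩ := v; obtain ⟨b, y⟩ := w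
  cases h1
  simp_all [Fin.ext_iff]

/-- fiber of the first projection of a sigma of `Fin`s -/
def sigmaFst {ι : Type*} (m : ι → ℕ) (j : ι) :
    {x : Σ k, Fin (m k) // x.1 = j} ≃ Fin (m j) where
  toFun x := Fin.cast (congrArg m x.2) x.1.2
  invFun t := ⟨⟨j, t⟩, rfl⟩
  left_inv x := by
    obtain ⟨⟨k, t⟩, h⟩ := x
    cases h; rfl
  right_inv t := rfl

abbrev Fam (s : Fin n → ℕ) (τ : Fin n → Fin n → ℕ) :=
  ∀ i : Fin n, Fin (s i) ≃ Σ j : Fin n, Fin (sym τ i j)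

def gfun (f : Fam s τ) (v : Σ i, Fin (s i)) : Σ i, Fin (s i) :=
  ⟨(f v.1 v.2).1,
    (f (f v.1 v.2).1).symm ⟨v.1, Fin.cast (sym_symm τ v.1 (f v.1 v.2).1) (f v.1 v.2).2⟩⟩

lemma gfun_mk (f : Fam s τ) (i : Fin n) (a : Fin (s i)) :
    gfun τ f ⟨i, a⟩ = ⟨(f i a).1,
      (f (f i a).1).symm ⟨i, Fin.cast (sym_symm τ i (f i a).1) (f i a).2⟩⟩ := rfl

lemma gfun_invol (f : Fam s τ) : Function.Involutive (gfun τ f) := by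
  rintro ⟨i, a⟩
  rcases h : f i a with ⟨j, t⟩
  have h1 : gfun τ f ⟨i, a⟩ = ⟨j, (f j).symm ⟨i, Fin.cast (sym_symm τ i j) t⟩⟩ := by
    rw [gfun_mk, h]
  rw [h1]
  have h2 : f j ((f j).symm ⟨i, Fin.cast (sym_symm τ i j) t⟩) = ⟨i, Fin.cast (sym_symm τ i j) t⟩ :=
    (f j).apply_symm_apply _
  have h3 : gfun τ f ⟨j, (f j).symm ⟨i, Fin.cast (sym_symm τ i j) t⟩⟩
      = ⟨i, (f i).symm ⟨j, Fin.cast (sym_symm τ j i) (Fin.cast (sym_symm τ i j) t)⟩⟩ := by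
    rw [gfun_mk, h2]
  rw [h3]
  have h4 : (⟨j, Fin.cast (sym_symm τ j i) (Fin.cast (sym_symm τ i j) t)⟩ :
      Σ k, Fin (sym τ i k)) = ⟨j, t⟩ := sfin_ext rfl (by simp)
  rw [h4, ← h, Equiv.symm_apply_apply]

/-- the perfect matching associated to a family of equivalences -/
def Phi (f : Fam s τ) : Equiv.Perm (Σ i, Fin (s i)) :=
  Function.Involutive.toPerm (gfun τ f) (gfun_invol τ f)

lemma Phi_apply (f : Fam s τ) (v : Σ i, Fin (s i)) : Phi τ f v = gfun τ f v := rfl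

lemma Phi_mul_self (f : Fam s τ) : Phi τ f * Phi τ f = 1 := by
  apply Equiv.ext
  intro v
  simp [Phi_apply, Equiv.Perm.mul_apply, gfun_invol τ f v]

lemma Phi_ne (f : Fam s τ) (v : Σ i, Fin (s i)) : (Phi τ f v).1 ≠ v.1 := by
  intro h
  have ht := (f v.1 v.2).2
  have h' : (f v.1 v.2).1 = v.1 := h
  rw [h'] at ht
  have h0 : sym τ v.1 v.1 = 0 := by simp [sym]
  have hlt := ht.isLt
  omega

lemma Phi_count (f : Fam s τ) (i j : Fin n) (hij : i < j) :
    (Finset.univ.filter (fun a : Fin (s i) => (Phi τ f ⟨i, a⟩).1 = j)).card = τ i j := by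
  have : (Finset.univ.filter (fun a : Fin (s i) => (Phi τ f ⟨i, a⟩).1 = j)).card
      = Fintype.card {a : Fin (s i) // (f i a).1 = j} := by
    rw [Fintype.card_subtype]
    rfl
  rw [this, Fintype.card_congr ((Equiv.subtypeEquiv (f i) (fun a => Iff.rfl)).trans
    (sigmaFst _ j))]
  simp [sym, hij]

section Matching

variable (π : Equiv.Perm (Σ i : Fin n, Fin (s i)))

/-- colour of a vertex: the part of its partner -/
def cc (i : Fin n) (a : Fin (s i)) : Fin n := (π ⟨i, a⟩).1

lemma eta_cast {v : Σ i, Fin (s i)} {j : Fin n} (h : (π v).1 = j) :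
    (⟨j, Fin.cast (congrArg s h) (π v).2⟩ : Σ i, Fin (s i)) = π v :=
  sfin_ext h.symm (by simp)

variable (h2 : ∀ v, π (π v) = v)

/-- the cross equivalence between opposite fibers of a matching -/
def cross (h2 : ∀ v, π (π v) = v) (i j : Fin n) :
    {a : Fin (s i) // cc π i a = j} ≃ {b : Fin (s j) // cc π j b = i} where
  toFun x := ⟨Fin.cast (congrArg s x.2) (π ⟨i, x.1⟩).2, by
    show (π ⟨j, _⟩).1 = i
    exact (congrArg (fun v => (π v).1) (eta_cast π x.2)).trans (congrArg Sigma.fst (h2 _))⟩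
  invFun y := ⟨Fin.cast (congrArg s y.2) (π ⟨j, y.1⟩).2, by
    show (π ⟨i, _⟩).1 = j
    exact (congrArg (fun v => (π v).1) (eta_cast π y.2)).trans (congrArg Sigma.fst (h2 _))⟩
  left_inv x := by
    obtain ⟨a, ha⟩ := x
    have key : π ⟨j, Fin.cast (congrArg s ha) (π ⟨i, a⟩).2⟩ = ⟨i, a⟩ := by
      exact (congrArg π (eta_cast π ha)).trans (h2 _)
    apply Subtype.ext
    apply Fin.ext
    simp only [Fin.coe_cast]
    exact congrArg (fun v : Σ k, Fin (s k) => (v.2 : ℕ)) key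
  right_inv y := by
    obtain ⟨b, hb⟩ := y
    have key : π ⟨i, Fin.cast (congrArg s hb) (π ⟨j, b⟩).2⟩ = ⟨j, b⟩ := by
      exact (congrArg π (eta_cast π hb)).trans (h2 _)
    apply Subtype.ext
    apply Fin.ext
    simp only [Fin.coe_cast]
    exact congrArg (fun v : Σ k, Fin (s k) => (v.2 : ℕ)) key

variable (hne : ∀ v : Σ i, Fin (s i), (π v).1 ≠ v.1)

/-- type of fiber labellings -/
abbrev Lab :=
  ∀ i j : Fin n, {a : Fin (s i) // i < j ∧ cc π i a = j} ≃ Fin (if i < j then τ i j else 0)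

/-- extend labels to an equivalence on each whole fiber -/
def blk (h2 : ∀ v, π (π v) = v) (hne : ∀ v : Σ i, Fin (s i), (π v).1 ≠ v.1)
    (e : Lab τ π) (i j : Fin n) :
    {a : Fin (s i) // cc π i a = j} ≃ Fin (sym τ i j) :=
  if h : i < j then
    ((Equiv.subtypeEquivRight (q := fun a => i < j ∧ cc π i a = j)
        (fun a => by simp [h])).trans (e i j)).trans (finCongr (by simp [sym, h]))
  else if h' : j < i then
    (((cross π h2 i j).trans (Equiv.subtypeEquivRight
        (q := fun b => j < i ∧ cc π j b = i) (fun b => by simp [h']))).trans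
      (e j i)).trans (finCongr (by simp [sym, h, h']))
  else by
    have hij : i = j := le_antisymm (not_lt.1 h') (not_lt.1 h)
    have e1 : IsEmpty {a : Fin (s i) // cc π i a = j} :=
      ⟨fun x => hne ⟨i, x.1⟩ (x.2.trans hij.symm)⟩
    have h0 : sym τ i j = 0 := by simp [sym, h, h']
    have e2 : IsEmpty (Fin (sym τ i j)) := ⟨fun t => by
      have hlt := t.isLt
      omega⟩
    exact Equiv.equivOfIsEmpty _ _

/-- reconstruct a family of equivalences from a matching and labels -/
def recon (e : Lab τ π) : Fam s τ :=
  fun i => (Equiv.sigmaFiberEquiv (cc π i)).symm.trans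
    (Equiv.sigmaCongrRight fun j => blk τ π h2 hne e i j)

lemma recon_apply (e : Lab τ π) (i : Fin n) (a : Fin (s i)) :
    recon τ π h2 hne e i a = ⟨cc π i a, blk τ π h2 hne e i (cc π i a) ⟨a, rfl⟩⟩ := rfl

@[simp] lemma finCongr_eq_cast {a b : ℕ} (h : a = b) (x : Fin a) :
    finCongr h x = Fin.cast h x := rfl

@[simp] lemma cast_cast {a b c : ℕ} (h : b = c) (h' : a = b) (x : Fin a) :
    Fin.cast h (Fin.cast h' x) = Fin.cast (h'.trans h) x := rfl

@[simp] lemma cast_self {a : ℕ} (h : a = a) (x : Fin a) : Fin.cast h x = x := rfl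

lemma blk_compat (e : Lab τ π) (i j : Fin n) (x : {a : Fin (s i) // cc π i a = j}) :
    (((blk τ π h2 hne e j i).symm (Fin.cast (sym_symm τ i j) (blk τ π h2 hne e i j x))).1 : ℕ)
      = ((π ⟨i, x.1⟩).2 : ℕ) := by
  rcases lt_trichotomy i j with hlt | heq | hlt
  · have hnlt : ¬ j < i := not_lt.2 hlt.le
    simp only [blk, dif_pos hlt, dif_neg hnlt]
    simp [cross, Equiv.symm_trans_apply, Equiv.trans_apply,
      Equiv.subtypeEquivRight_apply, Equiv.subtypeEquivRight_symm_apply]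
    rfl
  · exact absurd (x.2.trans heq.symm) (hne ⟨i, x.1⟩)
  · have hnlt : ¬ i < j := not_lt.2 hlt.le
    simp only [blk, dif_pos hlt, dif_neg hnlt]
    simp [cross, Equiv.symm_trans_apply, Equiv.trans_apply,
      Equiv.subtypeEquivRight_apply, Equiv.subtypeEquivRight_symm_apply]
    rfl

lemma Phi_recon (e : Lab τ π) : Phi τ (recon τ π h2 hne e) = π := by
  apply Equiv.ext
  rintro ⟨i, a⟩
  refine sfin_ext ?_ ?_
  · rfl
  · exact blk_compat τ π h2 hne e i (cc π i a) ⟨a, rfl⟩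

lemma hgf_fst (f : Fam s τ) (hgf : ∀ v, π v = gfun τ f v) (i : Fin n) (a : Fin (s i)) :
    cc π i a = (f i a).1 :=
  congrArg Sigma.fst (hgf ⟨i, a⟩)

lemma sym_eq_of_lt {i j : Fin n} (h : i < j) :
    sym τ i j = (if i < j then τ i j else 0) := by simp [sym, h]

/-- read off labels from a family of equivalences -/
def restr (f : Fam s τ) (hgf : ∀ v, π v = gfun τ f v) : Lab τ π := fun i j =>
  { toFun := fun x => Fin.cast (by
      have h1 : (f i x.1).1 = j := (hgf_fst τ π f hgf i x.1).symm.trans x.2.2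
      rw [h1]
      exact sym_eq_of_lt τ x.2.1) (f i x.1).2
    invFun := fun t =>
      if h : i < j then
        ⟨(f i).symm ⟨j, Fin.cast (sym_eq_of_lt τ h).symm t⟩, h, by
          show cc π i _ = j
          rw [hgf_fst τ π f hgf]
          rw [Equiv.apply_symm_apply]⟩
      else Fin.elim0 (Fin.cast (by simp [h]) t)
    left_inv := fun x => by
      obtain ⟨a, hij, hc⟩ := x
      have h1 : (f i a).1 = j := (hgf_fst τ π f hgf i a).symm.trans hc
      dsimp only
      rw [dif_pos hij]
      apply Subtype.ext
      show (f i).symm _ = a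
      rw [Equiv.symm_apply_eq]
      exact sfin_ext h1.symm (by simp)
    right_inv := fun t => by
      by_cases h : i < j
      · dsimp only
        rw [dif_pos h]
        apply Fin.ext
        have key := (f i).apply_symm_apply ⟨j, Fin.cast (sym_eq_of_lt τ h).symm t⟩
        have key2 := congrArg (fun y : Σ k, Fin (sym τ i k) => (y.2 : ℕ)) key
        simp only [Fin.coe_cast] at key2 ⊢
        exact key2
      · exact absurd t.isLt (by simp [h]) }

lemma recon_restr (f : Fam s τ) (hgf : ∀ v, π v = gfun τ f v) :
    recon τ π h2 hne (restr τ π f hgf) = f := by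
  funext i
  apply Equiv.ext
  intro a
  have key : ∀ (j : Fin n) (hj : cc π i a = j) (t : Fin (sym τ i j)),
      f i a = ⟨j, t⟩ →
      ((blk τ π h2 hne (restr τ π f hgf) i j ⟨a, hj⟩ : Fin (sym τ i j)) : ℕ) = (t : ℕ) := by
    intro j hj t hfa
    rcases lt_trichotomy i j with hlt | heq | hlt
    · simp only [blk, dif_pos hlt, Equiv.trans_apply, Equiv.subtypeEquivRight_apply,
        finCongr_eq_cast, restr, Equiv.coe_fn_mk, Fin.coe_cast]
      exact congrArg (fun y : Σ k, Fin (sym τ i k) => (y.2 : ℕ)) hfa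
    · exact absurd (hj.trans heq.symm) (hne ⟨i, a⟩)
    · have hnlt : ¬ i < j := not_lt.2 hlt.le
      simp only [blk, dif_neg hnlt, dif_pos hlt, Equiv.trans_apply,
        Equiv.subtypeEquivRight_apply, finCongr_eq_cast, restr, Equiv.coe_fn_mk,
        Fin.coe_cast, cross]
      have hπ : π ⟨i, a⟩ = ⟨j, (f j).symm ⟨i, Fin.cast (sym_symm τ i j) t⟩⟩ :=
        (hgf ⟨i, a⟩).trans (by rw [gfun_mk, hfa])
      have hb2 : Fin.cast (congrArg s hj) (π ⟨i, a⟩).2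
          = (f j).symm ⟨i, Fin.cast (sym_symm τ i j) t⟩ := by
        apply Fin.ext
        show ((π ⟨i, a⟩).2 : ℕ) = _
        exact congrArg (fun v : Σ k, Fin (s k) => (v.2 : ℕ)) hπ
      rw [hb2, Equiv.apply_symm_apply]
      simp
  have h1 : cc π i a = (f i a).1 := hgf_fst τ π f hgf i a
  have hfa : f i a = ⟨cc π i a, Fin.cast (congrArg (sym τ i) h1.symm) (f i a).2⟩ :=
    sfin_ext h1.symm (by simp)
  refine sfin_ext h1 ?_
  have := key (cc π i a) rfl (Fin.cast (congrArg (sym τ i) h1.symm) (f i a).2) hfa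
  simp only [Fin.coe_cast] at this
  exact this

lemma restr_recon (e : Lab τ π) (hgf' : ∀ v, π v = gfun τ (recon τ π h2 hne e) v) :
    restr τ π (recon τ π h2 hne e) hgf' = e := by
  funext i j
  apply Equiv.ext
  rintro ⟨a, hij, hc⟩
  subst hc
  apply Fin.ext
  simp only [restr, Equiv.coe_fn_mk, Fin.coe_cast]
  show ((blk τ π h2 hne e i (cc π i a) ⟨a, rfl⟩ : Fin _) : ℕ) = _
  simp only [blk, dif_pos hij, Equiv.trans_apply, Equiv.subtypeEquivRight_apply,
    finCongr_eq_cast, Fin.coe_cast]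

/-- the fiber of `Phi` over a matching is equivalent to the labellings -/
def fiberEquiv : {f : Fam s τ // Phi τ f = π} ≃ Lab τ π where
  toFun F := restr τ π F.1 (fun v => (DFunLike.congr_fun F.2 v).symm)
  invFun E := ⟨recon τ π h2 hne E, Phi_recon τ π h2 hne E⟩
  left_inv F := Subtype.ext (recon_restr τ π h2 hne F.1 _)
  right_inv E := restr_recon τ π h2 hne E _

/-- number of labellings -/
lemma card_Lab (hcount : ∀ i j : Fin n, i < j →
      (Finset.univ.filter (fun a : Fin (s i) => (π ⟨i, a⟩).1 = j)).card = τ i j) :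
    Fintype.card (Lab τ π)
      = ∏ i, ∏ j ∈ Finset.univ.filter (fun j : Fin n => i < j), (τ i j).factorial := by
  rw [Fintype.card_pi]
  refine Finset.prod_congr rfl fun i _ => ?_
  rw [Fintype.card_pi]
  have hD : ∀ j : Fin n, Fintype.card {a : Fin (s i) // i < j ∧ cc π i a = j}
      = (if i < j then τ i j else 0) := by
    intro j
    by_cases h : i < j
    · rw [if_pos h, Fintype.card_subtype, ← hcount i j h]
      exact congrArg Finset.card (Finset.filter_congr (fun a _ => by simp [h, cc]))
    · rw [if_neg h]
      have : IsEmpty {a : Fin (s i) // i < j ∧ cc π i a = j} := ⟨fun x => h x.2.1⟩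
      exact Fintype.card_eq_zero
  calc ∏ j, Fintype.card ({a : Fin (s i) // i < j ∧ cc π i a = j}
        ≃ Fin (if i < j then τ i j else 0))
      = ∏ j : Fin n, (if i < j then τ i j else 0).factorial := by
        refine Finset.prod_congr rfl fun j _ => ?_
        rw [Fintype.card_equiv (Fintype.equivFinOfCardEq (hD j)), hD j]
    _ = ∏ j ∈ Finset.univ.filter (fun j : Fin n => i < j), (τ i j).factorial := by
        rw [Finset.prod_filter]
        refine Finset.prod_congr rfl fun j _ => ?_
        by_cases h : i < j <;> simp [h]

end Matching

lemma sum_sym (i : Fin n)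
    (hτi : (∑ j ∈ Finset.univ.filter (fun j : Fin n => i < j), τ i j) +
        (∑ j ∈ Finset.univ.filter (fun j : Fin n => j < i), τ j i) = s i) :
    ∑ j, sym τ i j = s i := by
  rw [← hτi, Finset.sum_filter, Finset.sum_filter, ← Finset.sum_add_distrib]
  refine Finset.sum_congr rfl fun j _ => ?_
  rcases lt_trichotomy i j with h | h | h <;> simp [sym, h, h.not_gt, lt_irrefl]

lemma card_Fam
    (hτ : ∀ i : Fin n,
      (∑ j ∈ Finset.univ.filter (fun j : Fin n => i < j), τ i j) +
        (∑ j ∈ Finset.univ.filter (fun j : Fin n => j < i), τ j i) = s i) :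
    Fintype.card (Fam s τ) = ∏ i, (s i).factorial := by
  rw [Fintype.card_pi]
  refine Finset.prod_congr rfl fun i _ => ?_
  have hc : Fintype.card (Fin (s i)) = Fintype.card (Σ j : Fin n, Fin (sym τ i j)) := by
    simp [Fintype.card_sigma, sum_sym τ i (hτ i)]
  rw [Fintype.card_equiv (Fintype.equivOfCardEq hc)]
  simp

end CMF

/-- fiber counting in the proof of Lemma 7 of the paper: let
`V = Σ i, Fin (s i)` be the vertex set consisting of `s i` copies of each vertex
`i ∈ {1, …, n}` and let `G_s` be the complete multipartite graph joining copies of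
distinct vertices.  A perfect matching of `G_s` is a fixed-point-free involution `π`
of `V` that never matches two copies of the same vertex.  If `τ` is an `s`-matching
(`Σ_{j ≠ i} τ_{ij} = s_i` for all `i`, entries indexed by pairs `i < j`), then the
number of perfect matchings `π` of `G_s` having exactly `τ i j` edges between the
copies of `i` and the copies of `j` for every `i < j` equals `s!/τ!`. -/
theorem card_matchings_fiber {n : ℕ} (hn : 1 ≤ n) (s : Fin n → ℕ) (hs : ∀ i, 1 ≤ s i)
    (τ : Fin n → Fin n → ℕ)
    (hτ : ∀ i : Fin n,
      (∑ j ∈ Finset.univ.filter (fun j : Fin n => i < j), τ i j) +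
        (∑ j ∈ Finset.univ.filter (fun j : Fin n => j < i), τ j i) = s i) :
    ((Finset.univ.filter
        (fun π : Equiv.Perm (Σ i : Fin n, Fin (s i)) =>
          π * π = 1 ∧ (∀ v, (π v).1 ≠ v.1) ∧
            ∀ i j : Fin n, i < j →
              (Finset.univ.filter (fun a : Fin (s i) => (π ⟨i, a⟩).1 = j)).card = τ i j)).card
       : ℚ) =
      ((∏ i, (s i).factorial : ℕ) : ℚ) /
        ((∏ i, ∏ j ∈ Finset.univ.filter (fun j : Fin n => i < j), (τ i j).factorial : ℕ) : ℚ) := by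
  classical
  have hBpos : 0 < ∏ i, ∏ j ∈ Finset.univ.filter (fun j : Fin n => i < j), (τ i j).factorial :=
    Finset.prod_pos fun i _ => Finset.prod_pos fun j _ => Nat.factorial_pos _
  rw [eq_div_iff (Nat.cast_ne_zero.2 hBpos.ne')]
  have key : ∀ M : Finset (Equiv.Perm (Σ i : Fin n, Fin (s i))),
      (∀ π : Equiv.Perm (Σ i : Fin n, Fin (s i)), π ∈ M ↔
        (π * π = 1 ∧ (∀ v, (π v).1 ≠ v.1) ∧
          ∀ i j : Fin n, i < j →
            (Finset.univ.filter (fun a : Fin (s i) => (π ⟨i, a⟩).1 = j)).card = τ i j)) →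
      Fintype.card (CMF.Fam s τ)
        = M.card * ∏ i, ∏ j ∈ Finset.univ.filter (fun j : Fin n => i < j), (τ i j).factorial := by
    intro M hmem
    rw [← Finset.card_univ,
      Finset.card_eq_sum_card_fiberwise (f := CMF.Phi τ) (t := M)
        (fun f _ => (hmem _).2 ⟨CMF.Phi_mul_self τ f,
          CMF.Phi_ne τ f, fun i j hij => CMF.Phi_count τ f i j hij⟩)]
    rw [Finset.sum_congr rfl (fun π hπ => ?_), Finset.sum_const, smul_eq_mul]
    obtain ⟨h1, h2', h3⟩ := (hmem π).1 hπ
    have hinv : ∀ v, π (π v) = v := fun v => by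
      have := DFunLike.congr_fun h1 v
      simpa [Equiv.Perm.mul_apply] using this
    rw [← Fintype.card_subtype,
      Fintype.card_congr (CMF.fiberEquiv τ π hinv h2'),
      CMF.card_Lab τ π h3]
  have key2 := key (Finset.univ.filter
        (fun π : Equiv.Perm (Σ i : Fin n, Fin (s i)) =>
          π * π = 1 ∧ (∀ v, (π v).1 ≠ v.1) ∧
            ∀ i j : Fin n, i < j →
              (Finset.univ.filter (fun a : Fin (s i) => (π ⟨i, a⟩).1 = j)).card = τ i j))
    (fun π => by
      rw [Finset.mem_filter]
      simp only [Finset.mem_univ, true_and])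
  rw [← CMF.card_Fam τ hτ]
  exact_mod_cast key2.symm
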